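/- If S and T are measurable subsets of ℝ of finite Lebesgue measure, then |D(S) − D(T)| ≤ 2·λ(S △ T), where S △ T = (S \ T) ∪ (T \ S) denotes the symmetric difference. -/

import Mathlib

open MeasureTheory

/-- A set `C ⊆ ℝ` is symmetric if it is invariant under some reflection `x ↦ 2c − x`. -/
def IsSymmetricSet (C : Set ℝ) : Prop :=
  ∃ c : ℝ, ∀ x : ℝ, x ∈ C ↔ 2 * c - x ∈ C

/-- `symD A` is the supremum of measures of symmetric measurable subsets of `A`. -/
noncomputable def symD (A : Set ℝ) : ℝ :=
  sSup {m : ℝ | ∃ C : Set ℝ, C ⊆ A ∧ MeasurableSet C ∧ IsSymmetricSet C ∧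
    m = (volume C).toReal}

lemma symD_set_zero_mem (A : Set ℝ) :
    (0 : ℝ) ∈ {m : ℝ | ∃ C : Set ℝ, C ⊆ A ∧ MeasurableSet C ∧ IsSymmetricSet C ∧
      m = (volume C).toReal} :=
  ⟨∅, Set.empty_subset _, MeasurableSet.empty, ⟨0, fun x => by simp⟩, by simp⟩

lemma symD_set_bddAbove (A : Set ℝ) (hAfin : volume A < ⊤) :
    BddAbove {m : ℝ | ∃ C : Set ℝ, C ⊆ A ∧ MeasurableSet C ∧ IsSymmetricSet C ∧
      m = (volume C).toReal} := by
  refine ⟨(volume A).toReal, ?_⟩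
  rintro m ⟨C, hCA, -, -, rfl⟩
  exact ENNReal.toReal_mono hAfin.ne (measure_mono hCA)

lemma volume_preimage_refl (c : ℝ) (A : Set ℝ) :
    volume ((fun x => 2 * c - x) ⁻¹' A) = volume A := by
  have h : (fun x : ℝ => 2 * c - x) = (fun x => 2 * c + x) ∘ Neg.neg := by
    funext x; simp [sub_eq_add_neg]
  rw [h, Set.preimage_comp, Measure.measure_preimage_neg, measure_preimage_add]

lemma symD_le_aux (S T : Set ℝ) (hS : MeasurableSet S) (hT : MeasurableSet T)
    (hSfin : volume S < ⊤) (hTfin : volume T < ⊤) :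
    symD S ≤ symD T + 2 * (volume (symmDiff S T)).toReal := by
  have hsd : symmDiff S T ⊆ S ∪ T := symmDiff_le_sup
  have hsdfin : volume (symmDiff S T) < ⊤ :=
    lt_of_le_of_lt (measure_mono hsd) (measure_union_lt_top hSfin hTfin)
  refine csSup_le ⟨0, symD_set_zero_mem S⟩ ?_
  rintro m ⟨C, hCS, hCmeas, ⟨c, hc⟩, rfl⟩
  set refl : ℝ → ℝ := fun x => 2 * c - x with hrefl
  have hreflmeas : Measurable refl := (measurable_const.sub measurable_id)
  set D : Set ℝ := (C ∩ T) ∩ refl ⁻¹' (C ∩ T) with hD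
  have hDmeas : MeasurableSet D :=
    (hCmeas.inter hT).inter (hreflmeas (hCmeas.inter hT))
  have hDsubT : D ⊆ T := fun x hx => hx.1.2
  have hDsym : IsSymmetricSet D := by
    refine ⟨c, fun x => ?_⟩
    have h2 : 2 * c - (2 * c - x) = x := by ring
    simp only [hD, hrefl, Set.mem_inter_iff, Set.mem_preimage, h2]
    tauto
  -- C is covered by D together with two copies of the symmetric difference
  have hcover : C ⊆ D ∪ (symmDiff S T ∪ refl ⁻¹' (symmDiff S T)) := by
    intro x hx
    by_cases hxD : x ∈ D
    · exact Or.inl hxD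
    · have hrC : refl x ∈ C := (hc x).mp hx
      right
      by_cases hxT : x ∈ T
      · -- then refl x ∉ T (since x ∈ C ∩ T, refl x ∈ C but x ∉ D)
        have hrT : refl x ∉ T := by
          intro hrT
          exact hxD ⟨⟨hx, hxT⟩, hrC, hrT⟩
        exact Or.inr (Set.mem_symmDiff.mpr (Or.inl ⟨hCS hrC, hrT⟩))
      · exact Or.inl (Set.mem_symmDiff.mpr (Or.inl ⟨hCS hx, hxT⟩))
  have hvol : volume C ≤ volume D + 2 * volume (symmDiff S T) := by
    calc volume C ≤ volume (D ∪ (symmDiff S T ∪ refl ⁻¹' (symmDiff S T))) :=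
          measure_mono hcover
      _ ≤ volume D + volume (symmDiff S T ∪ refl ⁻¹' (symmDiff S T)) :=
          measure_union_le _ _
      _ ≤ volume D + (volume (symmDiff S T) + volume (refl ⁻¹' (symmDiff S T))) :=
          add_le_add_right (measure_union_le _ _) _
      _ = volume D + 2 * volume (symmDiff S T) := by
          rw [volume_preimage_refl c, two_mul]
  have hDfin : volume D < ⊤ := lt_of_le_of_lt (measure_mono hDsubT) hTfin
  have hRHSfin : volume D + 2 * volume (symmDiff S T) ≠ ⊤ := by
    refine ENNReal.add_ne_top.mpr ⟨hDfin.ne, ?_⟩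
    exact ENNReal.mul_ne_top (by norm_num) hsdfin.ne
  have htr : (volume C).toReal ≤ (volume D).toReal + 2 * (volume (symmDiff S T)).toReal := by
    have := ENNReal.toReal_mono hRHSfin hvol
    rwa [ENNReal.toReal_add hDfin.ne (ENNReal.mul_ne_top (by norm_num) hsdfin.ne),
      ENNReal.toReal_mul, ENNReal.toReal_ofNat] at this
  refine le_trans htr (add_le_add_left ?_ _)
  exact le_csSup (symD_set_bddAbove T hTfin) ⟨D, hDsubT, hDmeas, hDsym, rfl⟩

theorem abs_symD_sub_symD_le (S T : Set ℝ) (hS : MeasurableSet S) (hT : MeasurableSet T)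
    (hSfin : volume S < ⊤) (hTfin : volume T < ⊤) :
    |symD S - symD T| ≤ 2 * (volume (symmDiff S T)).toReal := by
  rw [abs_sub_le_iff]
  constructor
  · have := symD_le_aux S T hS hT hSfin hTfin
    linarith
  · have := symD_le_aux T S hT hS hTfin hSfin
    rw [symmDiff_comm] at this
    linarith
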